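/- In the setting of a chain of N+1 particles with x_N ≡ L fixed and potential energy U = −f x_0 + (ω₀²/2) x_0² + (ω₁²/2) Σ_{i=1}^{N} (x_i − x_{i−1} − a)², the unique equilibrium configuration satisfies the natural order 0 ≤ x_0 < x_1 < ... < x_N = L if and only if ω₁²(a − L/N) ≤ f < ω₀²L + ω₁²a. -/

import Mathlib

theorem stmt2 (N : ℕ) (hN : 1 ≤ N) (L a f ω0 ω1 : ℝ)
    (hL : 0 < L) (ha : 0 < a) (hω0 : 0 < ω0) (hω1 : 0 < ω1)
    (X : ℕ → ℝ)
    -- the unique equilibrium configuration of the chain with particle N fixed at L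
    (hX : ∀ k, X k =
      (ω1 ^ 2 * (L - N * a) + N * f) / (ω1 ^ 2 + ω0 ^ 2 * N)
        + k * ((ω0 ^ 2 * L + ω1 ^ 2 * a - f) / (ω1 ^ 2 + ω0 ^ 2 * N))) :
    -- natural order 0 ≤ x_0 < x_1 < … < x_N = L holds iff ω₁²(a − L/N) ≤ f < ω₀²L + ω₁²a
    (0 ≤ X 0 ∧ (∀ k < N, X k < X (k + 1)) ∧ X N = L) ↔
      (ω1 ^ 2 * (a - L / N) ≤ f ∧ f < ω0 ^ 2 * L + ω1 ^ 2 * a) := by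
  have hNpos : (0:ℝ) < N := by exact_mod_cast Nat.lt_of_lt_of_le Nat.zero_lt_one hN
  have hD : (0:ℝ) < ω1 ^ 2 + ω0 ^ 2 * N := by positivity
  have hstep : ∀ k : ℕ, X (k+1) - X k = (ω0 ^ 2 * L + ω1 ^ 2 * a - f) / (ω1 ^ 2 + ω0 ^ 2 * N) := by
    intro k
    rw [hX (k+1), hX k]
    push_cast
    ring
  constructor
  · rintro ⟨h0, hmono, -⟩
    have h01 := hmono 0 (by exact_mod_cast hN)
    have hd : 0 < (ω0 ^ 2 * L + ω1 ^ 2 * a - f) / (ω1 ^ 2 + ω0 ^ 2 * N) := by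
      have := hstep 0
      linarith
    have hf : f < ω0 ^ 2 * L + ω1 ^ 2 * a := by
      have := (div_pos_iff.mp hd)
      rcases this with ⟨h, _⟩ | ⟨_, h⟩
      · linarith
      · linarith
    refine ⟨?_, hf⟩
    rw [hX 0] at h0
    simp at h0
    rw [div_nonneg_iff] at h0
    rcases h0 with ⟨h, _⟩ | ⟨_, h⟩
    · rw [show ω1 ^ 2 * (a - L / ↑N) = (ω1 ^ 2 * (↑N * a - L)) / ↑N from by field_simp,
        div_le_iff₀ hNpos]
      nlinarith
    · linarith
  · rintro ⟨h1, h2⟩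
    have hnum : 0 ≤ ω1 ^ 2 * (L - N * a) + N * f := by
      rw [show ω1 ^ 2 * (a - L / ↑N) = (ω1 ^ 2 * (↑N * a - L)) / ↑N from by field_simp,
        div_le_iff₀ hNpos] at h1
      nlinarith
    have hd : 0 < (ω0 ^ 2 * L + ω1 ^ 2 * a - f) / (ω1 ^ 2 + ω0 ^ 2 * N) :=
      div_pos (by linarith) hD
    refine ⟨?_, fun k _ => ?_, ?_⟩
    · rw [hX 0]; simp; positivity
    · have := hstep k; linarith
    · rw [hX N]
      field_simp
      ring
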